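/- Let β ∈ B_n and let β = Δ_n^{−t} β' be the unique decomposition with t a nonnegative integer and β' ∈ B⁺_n not left divisible by Δ_n unless t = 0. Then t · n(n−1)/2 + ℓ(β') ≤ (n² − n − 1) · ‖β‖_Σ, where ℓ(β') is the common length of all positive words over σ_1,…,σ_{n−1} representing β' (all such words have the same length, since the braid relations are homogeneous). -/

import Mathlib

namespace Braid

/-- Defining relations of the braid group, with generators indexed by `Fin m`
(the index `i : Fin m` stands for the Artin generator `σ_{i+1}`). -/
def braidRels (m : ℕ) : Set (FreeGroup (Fin m)) :=
  {r | ∃ i j : Fin m,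
      ((i : ℕ) + 2 ≤ (j : ℕ) ∧
        r = FreeGroup.of i * FreeGroup.of j * (FreeGroup.of i)⁻¹ * (FreeGroup.of j)⁻¹) ∨
      ((j : ℕ) = (i : ℕ) + 1 ∧
        r = FreeGroup.of i * FreeGroup.of j * FreeGroup.of i *
            (FreeGroup.of j)⁻¹ * (FreeGroup.of i)⁻¹ * (FreeGroup.of j)⁻¹)}

/-- The braid group `B_n` on `n` strands, presented by the Artin generators
`σ_1, …, σ_{n-1}` and the braid relations. -/
abbrev B (n : ℕ) : Type := PresentedGroup (braidRels (n - 1))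

/-- The Artin generator `σ_i` of `B n`, for `1 ≤ i ≤ n-1` (junk value `1` otherwise). -/
def gen (n i : ℕ) : B n :=
  if h : i - 1 < n - 1 then PresentedGroup.of (⟨i - 1, h⟩ : Fin (n - 1)) else 1

/-- The positive braid monoid `B⁺_k` inside `B n`: the submonoid generated by
`σ_1, …, σ_{k-1}`. -/
def Bplus (n k : ℕ) : Submonoid (B n) :=
  Submonoid.closure {x | ∃ i, 1 ≤ i ∧ i + 1 ≤ k ∧ x = gen n i}

/-- The subgroup `B_k` of `B n`, generated by `σ_1, …, σ_{k-1}`. -/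
def Bsub (n k : ℕ) : Subgroup (B n) :=
  Subgroup.closure {x | ∃ i, 1 ≤ i ∧ i + 1 ≤ k ∧ x = gen n i}

/-- `β` left-divides `γ` (with respect to the positive monoid `B⁺_n`). -/
def LDiv (n : ℕ) (β γ : B n) : Prop := β⁻¹ * γ ∈ Bplus n n

/-- `β` right-divides `γ` (with respect to the positive monoid `B⁺_n`). -/
def RDiv (n : ℕ) (β γ : B n) : Prop := γ * β⁻¹ ∈ Bplus n n

/-- The Garside element `Δ_k = (σ_1⋯σ_{k-1})(σ_1⋯σ_{k-2})⋯(σ_1σ_2)σ_1` of `B⁺_k`,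
viewed inside `B n`. -/
def delta (n k : ℕ) : B n :=
  ((List.range (k - 1)).reverse.map
    (fun j => ((List.range' 1 (j + 1)).map (gen n)).prod)).prod

/-- The `k`-th power of the flip automorphism `φ_n` of `B n`:
conjugation by `Δ_n^k`. -/
def flip (n k : ℕ) (x : B n) : B n := delta n n ^ k * x * (delta n n ^ k)⁻¹

/-- The set `φ_n^k(B⁺_{n-1})` inside `B n`. -/
def flipSet (n k : ℕ) : Set (B n) := flip n k '' (Bplus n (n - 1) : Set (B n))

/-- `δ` is the maximal right divisor of `β` lying in the set `X`:
`δ ∈ X`, `δ` right-divides `β`, and every right divisor of `β` lying in `X`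
right-divides `δ`. -/
def IsMaxRDivIn (n : ℕ) (X : Set (B n)) (β δ : B n) : Prop :=
  δ ∈ X ∧ RDiv n δ β ∧ ∀ γ ∈ X, RDiv n γ β → RDiv n γ δ

/-- The product `φ_n^{d-1}(b d) ⋯ φ_n^{k-1}(b k)` (factors in decreasing order of
the index, from `d` down to `k`). -/
def tailProd (n : ℕ) (b : ℕ → B n) (k d : ℕ) : B n :=
  ((List.range' k (d + 1 - k)).reverse.map (fun l => flip n (l - 1) (b l))).prod

/-- `(b d, …, b 1)` is the `φ_n`-splitting of `β`: each `b k` lies in `B⁺_{n-1}`,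
`b d ≠ 1`, `β = φ_n^{d-1}(b d) ⋯ φ_n(b 2) (b 1)`, and for each `k`, the element
`φ_n^{k-1}(b k)` is the maximal right divisor of `φ_n^{d-1}(b d) ⋯ φ_n^{k-1}(b k)`
lying in `φ_n^{k-1}(B⁺_{n-1})`. -/
def IsSplitting (n d : ℕ) (b : ℕ → B n) (β : B n) : Prop :=
  1 ≤ d ∧ (∀ k, 1 ≤ k → k ≤ d → b k ∈ Bplus n (n - 1)) ∧ b d ≠ 1 ∧
  β = tailProd n b 1 d ∧
  ∀ k, 1 ≤ k → k ≤ d →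
    IsMaxRDivIn n (flipSet n (k - 1)) (tailProd n b k d) (flip n (k - 1) (b k))

/-- Evaluation of a word over the letters `σ_i^{±1}` in `B n`: the letter `(i, true)`
stands for `σ_i` and `(i, false)` for `σ_i⁻¹`. -/
def evalWord (n : ℕ) (w : List (ℕ × Bool)) : B n :=
  (w.map (fun p => if p.2 then gen n p.1 else (gen n p.1)⁻¹)).prod

/-- A word over the letters `σ_j^{±1}` is `σ_i`-positive: it contains at least one
letter `σ_i`, no letter `σ_i⁻¹` and no letter `σ_j^{±1}` with `j > i`. -/
def SigmaPos (i : ℕ) (w : List (ℕ × Bool)) : Prop :=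
  (i, true) ∈ w ∧ (i, false) ∉ w ∧ ∀ p ∈ w, 1 ≤ p.1 ∧ p.1 ≤ i

/-- A word over the letters `σ_j^{±1}` is `σ_i`-negative: it contains at least one
letter `σ_i⁻¹`, no letter `σ_i` and no letter `σ_j^{±1}` with `j > i`. -/
def SigmaNeg (i : ℕ) (w : List (ℕ × Bool)) : Prop :=
  (i, false) ∈ w ∧ (i, true) ∉ w ∧ ∀ p ∈ w, 1 ≤ p.1 ∧ p.1 ≤ i

/-- The Dehornoy ordering on `B n`: `β < γ` iff `β⁻¹γ` is represented by a
`σ_i`-positive word for some `i ≤ n-1`. -/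
def dlt (n : ℕ) (β γ : B n) : Prop :=
  ∃ i w, i + 1 ≤ n ∧ SigmaPos i w ∧ evalWord n w = β⁻¹ * γ

/-- The nonstrict Dehornoy ordering. -/
def dle (n : ℕ) (β γ : B n) : Prop := dlt n β γ ∨ β = γ

/-- The minimal length of a word over `σ_1^{±1}, …, σ_{n-1}^{±1}` representing `β`. -/
noncomputable def normSigma (n : ℕ) (β : B n) : ℕ :=
  sInf {l | ∃ w : List (ℕ × Bool), (∀ p ∈ w, 1 ≤ p.1 ∧ p.1 ≤ n - 1) ∧
    evalWord n w = β ∧ w.length = l}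

/-- The (common) length of the positive words over `σ_1, …, σ_{n-1}` representing a
positive braid `β`. -/
noncomputable def posLen (n : ℕ) (β : B n) : ℕ :=
  sInf {l | ∃ w : List (ℕ × Bool), (∀ p ∈ w, 1 ≤ p.1 ∧ p.1 ≤ n - 1 ∧ p.2 = true) ∧
    evalWord n w = β ∧ w.length = l}

/-- The Birman–Ko–Lee generator `a_{p,q} = σ_p ⋯ σ_{q-2} σ_{q-1} σ_{q-2}⁻¹ ⋯ σ_p⁻¹`
of `B n`. -/
def bkl (n p q : ℕ) : B n :=
  ((List.range' p (q - 1 - p)).map (gen n)).prod * gen n (q - 1) *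
    (((List.range' p (q - 1 - p)).map (gen n)).prod)⁻¹

/-- The dual braid monoid `B⁺*_n`: the submonoid of `B n` generated by the
Birman–Ko–Lee generators. -/
def DualBplus (n : ℕ) : Submonoid (B n) :=
  Submonoid.closure {x | ∃ p q, 1 ≤ p ∧ p < q ∧ q ≤ n ∧ x = bkl n p q}

/-- Evaluation in `B n` of a word over the letters `a_{p,q}^{±1}`. -/
def evalDual (n : ℕ) (w : List ((ℕ × ℕ) × Bool)) : B n :=
  (w.map (fun l => if l.2 then bkl n l.1.1 l.1.2 else (bkl n l.1.1 l.1.2)⁻¹)).prod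

/-- The minimal length of a word over the letters `a_{p,q}^{±1}` (`1 ≤ p < q ≤ n`)
representing `β`. -/
noncomputable def normDual (n : ℕ) (β : B n) : ℕ :=
  sInf {l | ∃ w : List ((ℕ × ℕ) × Bool),
    (∀ p ∈ w, 1 ≤ p.1.1 ∧ p.1.1 < p.1.2 ∧ p.1.2 ≤ n) ∧ evalDual n w = β ∧ w.length = l}

lemma rel_eq_one {m : ℕ} {r : FreeGroup (Fin m)} (h : r ∈ braidRels m) :
    PresentedGroup.mk (braidRels m) r = 1 :=
  (QuotientGroup.eq_one_iff r).mpr (Subgroup.subset_normalClosure h)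

lemma gen_eq_of {n i : ℕ} (h : i - 1 < n - 1) :
    gen n i = PresentedGroup.of (⟨i - 1, h⟩ : Fin (n - 1)) := dif_pos h

lemma rel_comm {n : ℕ} {a b : ℕ} (ha : 1 ≤ a) (hab : a + 2 ≤ b) (hb : b ≤ n - 1) :
    gen n a * gen n b = gen n b * gen n a := by
  have ha' : a - 1 < n - 1 := by omega
  have hb' : b - 1 < n - 1 := by omega
  set i : Fin (n-1) := ⟨a-1, ha'⟩
  set j : Fin (n-1) := ⟨b-1, hb'⟩
  have hr : (FreeGroup.of i * FreeGroup.of j * (FreeGroup.of i)⁻¹ * (FreeGroup.of j)⁻¹)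
      ∈ braidRels (n-1) := ⟨i, j, Or.inl ⟨by simp [i, j]; omega, rfl⟩⟩
  have h1 := rel_eq_one hr
  rw [map_mul, map_mul, map_mul, map_inv, map_inv] at h1
  rw [gen_eq_of ha', gen_eq_of hb']
  exact mul_inv_eq_iff_eq_mul.mp (mul_inv_eq_one.mp h1)

lemma rel_braid {n a : ℕ} (ha : 1 ≤ a) (hb : a + 1 ≤ n - 1) :
    gen n a * gen n (a+1) * gen n a = gen n (a+1) * gen n a * gen n (a+1) := by
  have ha' : a - 1 < n - 1 := by omega
  have hb' : (a+1) - 1 < n - 1 := by omega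
  set i : Fin (n-1) := ⟨a-1, ha'⟩
  set j : Fin (n-1) := ⟨(a+1)-1, hb'⟩
  have hr : (FreeGroup.of i * FreeGroup.of j * FreeGroup.of i *
      (FreeGroup.of j)⁻¹ * (FreeGroup.of i)⁻¹ * (FreeGroup.of j)⁻¹) ∈ braidRels (n-1) :=
    ⟨i, j, Or.inr ⟨by simp [i, j]; omega, rfl⟩⟩
  have h1 := rel_eq_one hr
  simp only [map_mul, map_inv] at h1
  rw [gen_eq_of ha', gen_eq_of hb']
  exact mul_inv_eq_iff_eq_mul.mp (mul_inv_eq_iff_eq_mul.mp (mul_inv_eq_one.mp h1))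
variable {n : ℕ}

def posProd (n : ℕ) (L : List ℕ) : B n := (L.map (gen n)).prod

lemma posProd_nil : posProd n [] = 1 := rfl
lemma posProd_append (L1 L2 : List ℕ) :
    posProd n (L1 ++ L2) = posProd n L1 * posProd n L2 := by simp [posProd]
lemma posProd_cons (a : ℕ) (L : List ℕ) :
    posProd n (a :: L) = gen n a * posProd n L := by simp [posProd]
lemma posProd_singleton (a : ℕ) : posProd n [a] = gen n a := by simp [posProd]

def Cc (n k : ℕ) : B n := posProd n (List.range' 1 k)

lemma commute_gen_posProd {i : ℕ} {L : List ℕ} (h : ∀ x ∈ L, Commute (gen n i) (gen n x)) :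
    Commute (gen n i) (posProd n L) := by
  apply Commute.list_prod_right
  intro x hx
  obtain ⟨a, ha, rfl⟩ := List.mem_map.mp hx
  exact h a ha

lemma C_mul_gen {k j : ℕ} (hj : 1 ≤ j) (hjk : j + 1 ≤ k) (hk : k ≤ n - 1) :
    Cc n k * gen n j = gen n (j + 1) * Cc n k := by
  induction k with
  | zero => omega
  | succ k ih =>
    rcases Nat.lt_or_ge (j+1) (k+1) with hlt | hge
    · -- j + 1 ≤ k, use ih and commutation with the last letter
      have hcomm : Commute (gen n j) (gen n (1 + k)) :=
        rel_comm hj (by omega) (by omega)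
      have hsplit : Cc n (k+1) = Cc n k * gen n (1 + k) := by
        rw [Cc, Cc, List.range'_1_concat, posProd_append, posProd_singleton]
      rw [hsplit, mul_assoc, ← hcomm.eq, ← mul_assoc, ih (by omega) (by omega), mul_assoc]
    · -- j + 1 = k + 1, base case
      obtain rfl : k = j := by omega
      obtain ⟨j₀, rfl⟩ : ∃ j₀, k = j₀ + 1 := ⟨k - 1, by omega⟩
      have e1 : 1 + j₀ = j₀ + 1 := by omega
      have e2 : 1 + (j₀ + 1) = j₀ + 2 := by omega
      have hd : Cc n (j₀ + 2) = posProd n (List.range' 1 j₀) *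
          (gen n (j₀ + 1) * gen n (j₀ + 2)) := by
        rw [Cc, List.range'_1_concat, List.range'_1_concat, posProd_append, posProd_append,
          posProd_singleton, posProd_singleton, e1, e2, mul_assoc]
      have hcommP : Commute (gen n (j₀ + 2)) (posProd n (List.range' 1 j₀)) := by
        apply commute_gen_posProd
        intro x hx
        rw [List.mem_range'_1] at hx
        exact (rel_comm (by omega) (by omega) (by omega)).symm
      show Cc n (j₀+2) * gen n (j₀+1) = gen n (j₀+2) * Cc n (j₀+2)
      calc Cc n (j₀+2) * gen n (j₀+1)
          = posProd n (List.range' 1 j₀) *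
            (gen n (j₀+1) * gen n (j₀+2) * gen n (j₀+1)) := by
            rw [hd]; group
        _ = posProd n (List.range' 1 j₀) *
            (gen n (j₀+2) * gen n (j₀+1) * gen n (j₀+2)) := by
            rw [rel_braid (by omega) (by omega)]
        _ = gen n (j₀+2) * Cc n (j₀+2) := by
            rw [hd]; simp only [← mul_assoc]; rw [hcommP.eq]

lemma C_mul_C {k j : ℕ} (hjk : j + 1 ≤ k) (hk : k ≤ n - 1) :
    Cc n k * posProd n (List.range' 1 j) = posProd n (List.range' 2 j) * Cc n k := by
  induction j with
  | zero => simp [posProd]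
  | succ j ih =>
    rw [List.range'_1_concat, posProd_append, posProd_singleton, ← mul_assoc, ih (by omega)]
    rw [mul_assoc, C_mul_gen (by omega) (by omega) hk]
    rw [show List.range' 2 (j+1) = List.range' 2 j ++ [2 + j] from List.range'_1_concat,
      posProd_append, posProd_singleton]
    rw [show 1 + j + 1 = 2 + j by omega]
    group

variable {n : ℕ}

lemma delta_zero : delta n 0 = 1 := rfl
lemma delta_one : delta n 1 = 1 := rfl

lemma delta_two_add (m : ℕ) : delta n (m + 2) = Cc n (m + 1) * delta n (m + 1) := by
  rw [delta, delta]
  rw [show m + 2 - 1 = m + 1 from rfl, show m + 1 - 1 = m from rfl]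
  rw [List.range_succ, List.reverse_append]
  simp [Cc, posProd]

lemma delta_rec (m : ℕ) : delta n (m + 1) = Cc n m * delta n m := by
  cases m with
  | zero => simp [delta_zero, delta_one, Cc, posProd]
  | succ m => exact delta_two_add m

lemma commute_gen_Cc {i k : ℕ} (hik : k + 2 ≤ i) (hi : i ≤ n - 1) :
    Commute (gen n i) (Cc n k) := by
  apply commute_gen_posProd
  intro x hx
  rw [List.mem_range'_1] at hx
  exact (rel_comm (by omega) (by omega) hi).symm

lemma commute_gen_delta {i : ℕ} (hi : i ≤ n - 1) :
    ∀ k, k + 1 ≤ i → Commute (gen n i) (delta n k)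
  | 0, _ => by rw [delta_zero]; exact Commute.one_right _
  | (m+1), h => by
    rw [delta_rec]
    exact Commute.mul_right (commute_gen_Cc (by omega) hi)
      (commute_gen_delta hi m (by omega))

lemma delta_mul_gen : ∀ k, k ≤ n → ∀ i, 1 ≤ i → i ≤ k - 1 →
    delta n k * gen n i = gen n (k - i) * delta n k := by
  intro k
  induction k using Nat.strong_induction_on with
  | _ k ih =>
  intro hk i hi1 hi2
  match k, hi2 with
  | 0, hi2 => exact absurd hi2 (by omega)
  | 1, hi2 => exact absurd hi2 (by omega)
  | (m+2), hi2 =>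
    rw [delta_two_add]
    rcases Nat.lt_or_ge i (m+1) with hlt | hge
    · -- i ≤ m
      rw [mul_assoc, ih (m+1) (by omega) (by omega) i hi1 (by omega)]
      rw [← mul_assoc, C_mul_gen (by omega) (by omega) (by omega)]
      rw [show m + 1 - i + 1 = m + 2 - i by omega, mul_assoc]
    · -- i = m + 1
      obtain rfl : i = m + 1 := by omega
      have hdm : delta n (m+1) = Cc n m * delta n m := delta_rec m
      have hcomm : Commute (gen n (m+1)) (delta n m) :=
        commute_gen_delta (by omega) m (by omega)
      have hCm : Cc n m * gen n (1 + m) = Cc n (m+1) := by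
        rw [Cc, Cc, List.range'_1_concat, posProd_append, posProd_singleton]
      have lhs_eq : delta n (m+2) * gen n (m+1)
          = Cc n (m+1) * Cc n (m+1) * delta n m := by
        rw [delta_two_add, hdm, mul_assoc, mul_assoc, hcomm.eq.symm]
        rw [show gen n (1+m) = gen n (m+1) by rw [Nat.add_comm]] at hCm
        rw [← mul_assoc (Cc n m), hCm, mul_assoc]
      have rhs_eq : gen n 1 * delta n (m+2)
          = Cc n (m+1) * Cc n (m+1) * delta n m := by
        rw [delta_two_add, hdm]
        rw [show (Cc n m : B n) = posProd n (List.range' 1 m) from rfl]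
        rw [← mul_assoc, ← mul_assoc, mul_assoc (gen n 1), C_mul_C (by omega) (by omega)]
        rw [← mul_assoc, show gen n 1 * posProd n (List.range' 2 m)
            = posProd n (List.range' 1 (m+1)) by
          rw [List.range'_succ, posProd_cons]]
        rw [show posProd n (List.range' 1 (m+1)) = Cc n (m+1) from rfl]
      rw [← delta_two_add, lhs_eq, show m + 2 - (m+1) = 1 by omega, rhs_eq]


lemma gen_mem_Bplus (hn : 2 ≤ n) {i : ℕ} (h1 : 1 ≤ i) (h2 : i ≤ n - 1) :
    gen n i ∈ Bplus n n :=
  Submonoid.subset_closure ⟨i, h1, by omega, rfl⟩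

lemma posProd_mem (hn : 2 ≤ n) {L : List ℕ} (h : ∀ x ∈ L, 1 ≤ x ∧ x ≤ n - 1) :
    posProd n L ∈ Bplus n n := by
  induction L with
  | nil => exact one_mem _
  | cons a L ih =>
    rw [posProd_cons]
    exact mul_mem (gen_mem_Bplus hn (h a (by simp)).1 (h a (by simp)).2)
      (ih fun x hx => h x (by simp [hx]))

lemma Cc_mem (hn : 2 ≤ n) {k : ℕ} (hk : k ≤ n - 1) : Cc n k ∈ Bplus n n :=
  posProd_mem hn (fun x hx => by rw [List.mem_range'_1] at hx; omega)

lemma delta_mem (hn : 2 ≤ n) : ∀ k, k ≤ n → delta n k ∈ Bplus n n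
  | 0, _ => by rw [delta_zero]; exact one_mem _
  | (m+1), h => by
    rw [delta_rec]
    exact mul_mem (Cc_mem hn (by omega)) (delta_mem hn m (by omega))

lemma delta_eq_gen_mul (hn : 2 ≤ n) : ∀ k, k ≤ n → ∀ i, 1 ≤ i → i ≤ k - 1 →
    ∃ r ∈ Bplus n n, delta n k = gen n i * r := by
  intro k
  induction k using Nat.strong_induction_on with
  | _ k ih =>
  intro hk i hi1 hi2
  match k, hi2 with
  | 0, hi2 => exact absurd hi2 (by omega)
  | 1, hi2 => exact absurd hi2 (by omega)
  | (m+2), hi2 =>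
    rcases Nat.lt_or_ge i 2 with h1 | h2
    · obtain rfl : i = 1 := by omega
      refine ⟨posProd n (List.range' 2 m) * delta n (m+1),
        mul_mem (posProd_mem hn ?_) (delta_mem hn _ (by omega)), ?_⟩
      · intro x hx; rw [List.mem_range'_1] at hx; omega
      · rw [delta_two_add, Cc, List.range'_succ, posProd_cons, mul_assoc]
    · obtain ⟨r, hr, hEq⟩ := ih (m+1) (by omega) (by omega) (i-1) (by omega) (by omega)
      refine ⟨Cc n (m+1) * r, mul_mem (Cc_mem hn (by omega)) hr, ?_⟩
      rw [delta_two_add, hEq, ← mul_assoc, C_mul_gen (by omega) (by omega) (by omega)]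
      rw [show i - 1 + 1 = i by omega, mul_assoc]

lemma conj_gen (hn : 2 ≤ n) {i : ℕ} (h1 : 1 ≤ i) (h2 : i ≤ n - 1) :
    delta n n * gen n i * (delta n n)⁻¹ = gen n (n - i) := by
  rw [delta_mul_gen n le_rfl i h1 h2]
  group

lemma conj_mem (hn : 2 ≤ n) {x : B n} (hx : x ∈ Bplus n n) :
    delta n n * x * (delta n n)⁻¹ ∈ Bplus n n := by
  induction hx using Submonoid.closure_induction with
  | mem x hx =>
    obtain ⟨i, hi1, hi2, rfl⟩ := hx
    rw [conj_gen hn hi1 (by omega)]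
    exact gen_mem_Bplus hn (by omega) (by omega)
  | one => simpa using one_mem _
  | mul a b ha hb hA hB =>
    have : delta n n * (a*b) * (delta n n)⁻¹
        = (delta n n * a * (delta n n)⁻¹) * (delta n n * b * (delta n n)⁻¹) := by group
    rw [this]; exact mul_mem hA hB

lemma conj_pow_mem (hn : 2 ≤ n) (k : ℕ) {x : B n} (hx : x ∈ Bplus n n) :
    delta n n ^ k * x * (delta n n ^ k)⁻¹ ∈ Bplus n n := by
  induction k with
  | zero => simpa using hx
  | succ k ih =>
    have : delta n n ^ (k+1) * x * (delta n n ^ (k+1))⁻¹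
        = delta n n * (delta n n ^ k * x * (delta n n ^ k)⁻¹) * (delta n n)⁻¹ := by
      rw [pow_succ']; group
    rw [this]; exact conj_mem hn ih

noncomputable def expHom (n : ℕ) : B n →* Multiplicative ℤ :=
  PresentedGroup.toGroup (f := fun _ => Multiplicative.ofAdd (1:ℤ)) (by
    intro r hr
    obtain ⟨i, j, h | h⟩ := hr <;> rw [h.2] <;>
      simp only [map_mul, map_inv, FreeGroup.lift_apply_of] <;> group)

noncomputable def eZ (x : B n) : ℤ := Multiplicative.toAdd (expHom n x)

lemma eZ_mul (x y : B n) : eZ (x * y) = eZ x + eZ y := by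
  simp [eZ, map_mul]

lemma eZ_one : eZ (1 : B n) = 0 := by simp [eZ]

lemma eZ_inv (x : B n) : eZ x⁻¹ = - eZ x := by simp [eZ]

lemma eZ_pow (x : B n) (t : ℕ) : eZ (x ^ t) = t * eZ x := by
  induction t with
  | zero => simpa using eZ_one
  | succ t ih => rw [pow_succ, eZ_mul, ih]; push_cast; ring

lemma eZ_gen {i : ℕ} (h : i - 1 < n - 1) : eZ (gen n i) = 1 := by
  rw [gen_eq_of h, eZ]
  unfold expHom
  rw [PresentedGroup.toGroup.of]
  rfl

lemma eZ_posProd {L : List ℕ} (h : ∀ x ∈ L, 1 ≤ x ∧ x ≤ n - 1) (hn : 2 ≤ n) :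
    eZ (posProd n L) = L.length := by
  induction L with
  | nil => simpa [posProd_nil] using eZ_one
  | cons a L ih =>
    have ha := h a (by simp)
    rw [posProd_cons, eZ_mul, eZ_gen (by omega), ih (fun x hx => h x (by simp [hx]))]
    push_cast [List.length_cons]; omega

lemma eZ_Cc {k : ℕ} (hk : k ≤ n - 1) (hn : 2 ≤ n) : eZ (Cc n k) = k := by
  rw [Cc, eZ_posProd (fun x hx => by rw [List.mem_range'_1] at hx; omega) hn]
  simp

lemma eZ_delta (hn : 2 ≤ n) : ∀ k, k ≤ n → 2 * eZ (delta n k) = (k * (k-1) : ℕ)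
  | 0, _ => by simp [delta_zero, eZ_one]
  | (m+1), h => by
    rw [delta_rec, eZ_mul, eZ_Cc (by omega) hn]
    have ih := eZ_delta hn m (by omega)
    have harith : ((m+1) * (m+1-1) : ℕ) = 2*m + (m * (m-1) : ℕ) := by
      cases m with
      | zero => rfl
      | succ m => simp only [Nat.add_sub_cancel]; ring
    rw [harith]
    push_cast
    omega

lemma evalWord_nil : evalWord n [] = 1 := rfl

lemma evalWord_cons (a : ℕ × Bool) (w : List (ℕ × Bool)) :
    evalWord n (a :: w)
      = (if a.2 then gen n a.1 else (gen n a.1)⁻¹) * evalWord n w := by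
  simp [evalWord]

lemma evalWord_append (u v : List (ℕ × Bool)) :
    evalWord n (u ++ v) = evalWord n u * evalWord n v := by
  simp [evalWord]

lemma evalWord_invWord (w : List (ℕ × Bool)) :
    evalWord n (w.reverse.map (fun p => (p.1, !p.2))) = (evalWord n w)⁻¹ := by
  induction w with
  | nil => simp [evalWord]
  | cons a w ih =>
    rw [evalWord_cons, List.reverse_cons, List.map_append, evalWord_append, ih]
    cases h : a.2 <;> simp [evalWord, h]

lemma filter_length_split (w : List (ℕ × Bool)) :
    (w.filter (fun p => p.2)).length + (w.filter (fun p => !p.2)).length = w.length := by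
  induction w with
  | nil => rfl
  | cons a l ih => cases h : a.2 <;> simp [List.filter_cons, h] <;> omega

lemma eZ_evalWord (hn : 2 ≤ n) {w : List (ℕ × Bool)}
    (h : ∀ p ∈ w, 1 ≤ p.1 ∧ p.1 ≤ n - 1) :
    eZ (evalWord n w)
      = ((w.filter (fun p => p.2)).length : ℤ) - (w.filter (fun p => !p.2)).length := by
  induction w with
  | nil => simpa [evalWord_nil] using eZ_one
  | cons a w ih =>
    have ha := h a (by simp)
    have hg : eZ (gen n a.1) = 1 := eZ_gen (by omega)
    have ih' := ih (fun p hp => h p (by simp [hp]))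
    rw [evalWord_cons, eZ_mul]
    cases hb : a.2 <;>
      simp [hb, List.filter_cons, eZ_inv, hg, ih'] <;> push_cast <;> omega

lemma exists_posWord (hn : 2 ≤ n) {x : B n} (hx : x ∈ Bplus n n) :
    ∃ w : List (ℕ × Bool), (∀ p ∈ w, 1 ≤ p.1 ∧ p.1 ≤ n - 1 ∧ p.2 = true) ∧
      evalWord n w = x := by
  induction hx using Submonoid.closure_induction with
  | mem x hx =>
    obtain ⟨i, hi1, hi2, rfl⟩ := hx
    exact ⟨[(i, true)], by simp; omega, by simp [evalWord]⟩
  | one => exact ⟨[], by simp, rfl⟩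
  | mul a b ha hb hA hB =>
    obtain ⟨u, hu, hue⟩ := hA
    obtain ⟨v, hv, hve⟩ := hB
    refine ⟨u ++ v, ?_, by rw [evalWord_append, hue, hve]⟩
    intro p hp
    rcases List.mem_append.mp hp with h | h
    exacts [hu p h, hv p h]

lemma posLen_eZ (hn : 2 ≤ n) {x : B n} (hx : x ∈ Bplus n n) :
    (posLen n x : ℤ) = eZ x := by
  obtain ⟨w, hw, hev⟩ := exists_posWord hn hx
  have hne : {l | ∃ w : List (ℕ × Bool), (∀ p ∈ w, 1 ≤ p.1 ∧ p.1 ≤ n - 1 ∧ p.2 = true) ∧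
      evalWord n w = x ∧ w.length = l}.Nonempty := ⟨w.length, w, hw, hev, rfl⟩
  obtain ⟨v, hv, hvev, hvlen⟩ := Nat.sInf_mem hne
  have h1 : posLen n x = v.length := hvlen.symm
  have hfilt : v.filter (fun p => p.2) = v := by
    rw [List.filter_eq_self]; intro p hp; exact (hv p hp).2.2
  have hfilt2 : v.filter (fun p => !p.2) = [] := by
    rw [List.filter_eq_nil_iff]
    intro p hp
    simp [(hv p hp).2.2]
  have := eZ_evalWord hn (w := v) (fun p hp => ⟨(hv p hp).1, (hv p hp).2.1⟩)
  rw [hvev, hfilt, hfilt2] at this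
  rw [h1, this]
  simp

lemma decomp (hn : 2 ≤ n) : ∀ w : List (ℕ × Bool), (∀ p ∈ w, 1 ≤ p.1 ∧ p.1 ≤ n - 1) →
    ∃ x ∈ Bplus n n,
      evalWord n w = (delta n n ^ ((w.filter (fun p => !p.2)).length))⁻¹ * x := by
  intro w
  induction w with
  | nil => exact fun _ => ⟨1, one_mem _, by simp [evalWord_nil]⟩
  | cons a w ih =>
    intro h
    obtain ⟨x, hx, hEq⟩ := ih (fun p hp => h p (by simp [hp]))
    have ha := h a (by simp)
    obtain ⟨i, b⟩ := a
    set k := (w.filter (fun p => !p.2)).length with hk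
    cases b with
    | true =>
      refine ⟨delta n n ^ k * gen n i * (delta n n ^ k)⁻¹ * x,
        mul_mem (conj_pow_mem hn k (gen_mem_Bplus hn ha.1 ha.2)) hx, ?_⟩
      have hfc : (((i, true) :: w).filter (fun p => !p.2)).length = k := by
        simp [List.filter_cons, hk]
      rw [hfc, evalWord_cons, hEq]
      simp only [if_true]
      group
    | false =>
      obtain ⟨r, hr, hΔ⟩ := delta_eq_gen_mul hn n le_rfl i ha.1 (by omega)
      have hinv : (gen n i)⁻¹ = r * (delta n n)⁻¹ := by rw [hΔ]; group
      refine ⟨delta n n ^ (k+1) * r * (delta n n ^ (k+1))⁻¹ * x,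
        mul_mem (conj_pow_mem hn (k+1) hr) hx, ?_⟩
      have hfc : (((i, false) :: w).filter (fun p => !p.2)).length = k + 1 := by
        simp [List.filter_cons, hk]
      rw [hfc, evalWord_cons, hEq]
      simp only [if_false, Bool.false_eq_true]
      rw [hinv, pow_succ]
      group

/-- If `β = Δ_n^{-t} β'` is the Garside quotient decomposition of `β`,
then `t·n(n-1)/2 + ℓ(β') ≤ (n² - n - 1)·‖β‖_Σ`. -/
theorem garside_quotient_length_bound (n t : ℕ) (hn : 2 ≤ n) (β β' : B n)
    (h1 : β' ∈ Bplus n n) (h2 : β = (delta n n ^ t)⁻¹ * β')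
    (h3 : t ≠ 0 → ¬ LDiv n (delta n n) β') :
    t * (n * (n - 1) / 2) + posLen n β' ≤ (n ^ 2 - n - 1) * normSigma n β := by
  obtain ⟨wp, hwp, hwpe⟩ := exists_posWord hn h1
  obtain ⟨wd, hwd, hwde⟩ := exists_posWord hn (delta_mem hn n le_rfl)
  have hpow : ∀ s : ℕ, ∃ u : List (ℕ × Bool), (∀ p ∈ u, 1 ≤ p.1 ∧ p.1 ≤ n - 1) ∧
      evalWord n u = delta n n ^ s := by
    intro s
    induction s with
    | zero => exact ⟨[], by simp, by simp [evalWord_nil]⟩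
    | succ s ih =>
      obtain ⟨u, hu, hue⟩ := ih
      refine ⟨wd ++ u, ?_, by rw [evalWord_append, hue, hwde, pow_succ']⟩
      intro p hp
      rcases List.mem_append.mp hp with h | h
      · exact ⟨(hwd p h).1, (hwd p h).2.1⟩
      · exact hu p h
  obtain ⟨u, hu, hue⟩ := hpow t
  have hwβ : evalWord n (u.reverse.map (fun p => (p.1, !p.2)) ++ wp) = β := by
    rw [evalWord_append, evalWord_invWord, hue, hwpe, h2]
  have hwβvalid : ∀ p ∈ u.reverse.map (fun p => (p.1, !p.2)) ++ wp,
      1 ≤ p.1 ∧ p.1 ≤ n - 1 := by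
    intro p hp
    rcases List.mem_append.mp hp with h | h
    · obtain ⟨q, hq, rfl⟩ := List.mem_map.mp h
      exact hu q (List.mem_reverse.mp hq)
    · exact ⟨(hwp p h).1, (hwp p h).2.1⟩
  have hne : {l | ∃ w : List (ℕ × Bool), (∀ p ∈ w, 1 ≤ p.1 ∧ p.1 ≤ n - 1) ∧
      evalWord n w = β ∧ w.length = l}.Nonempty :=
    ⟨_, _, hwβvalid, hwβ, rfl⟩
  obtain ⟨w, hwvalid, hwe, hwlen⟩ := Nat.sInf_mem hne
  have hwlen' : w.length = normSigma n β := hwlen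
  obtain ⟨x, hxmem, hxe⟩ := decomp hn w hwvalid
  have hsplit : (w.filter (fun p => p.2)).length + (w.filter (fun p => !p.2)).length
      = w.length := filter_length_split w
  have htk : t ≤ (w.filter (fun p => !p.2)).length := by
    by_contra hc
    push_neg at hc
    have ht0 : t ≠ 0 := by omega
    apply h3 ht0
    have h4 : (delta n n ^ t)⁻¹ * β'
        = (delta n n ^ ((w.filter (fun p => !p.2)).length))⁻¹ * x := by
      rw [← h2, ← hwe, hxe]
    have hβ' : β' = delta n n ^ t *
        ((delta n n ^ ((w.filter (fun p => !p.2)).length))⁻¹ * x) := by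
      rw [← h4]; group
    have hsp : delta n n ^ t = delta n n *
        (delta n n ^ (t - (w.filter (fun p => !p.2)).length - 1) *
          delta n n ^ ((w.filter (fun p => !p.2)).length)) := by
      rw [← pow_add, ← pow_succ']
      congr 1
      omega
    have h5 : (delta n n)⁻¹ * β'
        = delta n n ^ (t - (w.filter (fun p => !p.2)).length - 1) * x := by
      rw [hβ', hsp]; group
    show (delta n n)⁻¹ * β' ∈ Bplus n n
    rw [h5]
    exact mul_mem (pow_mem (delta_mem hn n le_rfl) _) hxmem
  have heβ : eZ β = ((w.filter (fun p => p.2)).length : ℤ)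
      - (w.filter (fun p => !p.2)).length := by
    rw [← hwe]; exact eZ_evalWord hn hwvalid
  have hDn : 2 * eZ (delta n n) = (n * (n-1) : ℕ) := eZ_delta hn n le_rfl
  obtain ⟨m, rfl⟩ : ∃ m, n = m + 2 := ⟨n - 2, by omega⟩
  have hev : 2 ∣ (m+2) * ((m+2) - 1) := by
    have h6 := Nat.even_mul_succ_self (m+1)
    rw [show (m+2) - 1 = m+1 from rfl, mul_comm]
    exact h6.two_dvd
  have h2D : 2 * ((m+2) * ((m+2) - 1) / 2) = (m+2) * ((m+2) - 1) :=
    Nat.mul_div_cancel' hev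
  have hdZ : eZ (delta (m+2) (m+2)) = (((m+2) * ((m+2) - 1) / 2 : ℕ) : ℤ) := by
    have : ((2:ℤ)) * eZ (delta (m+2) (m+2))
        = 2 * (((m+2) * ((m+2) - 1) / 2 : ℕ) : ℤ) := by
      rw [hDn]
      exact_mod_cast congrArg (fun z : ℕ => (z : ℤ)) h2D.symm
    linarith
  have heβ' : eZ β' = ((w.filter (fun p => p.2)).length : ℤ)
      - (w.filter (fun p => !p.2)).length
      + t * (((m+2) * ((m+2) - 1) / 2 : ℕ) : ℤ) := by
    have h7 : eZ β = - (t * eZ (delta (m+2) (m+2))) + eZ β' := by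
      rw [h2, eZ_mul, eZ_inv, eZ_pow]
    rw [heβ, hdZ] at h7
    linarith
  have hplen : (posLen (m+2) β' : ℤ) = eZ β' := posLen_eZ hn h1
  have hsq : (m+2)^2 = (m+2) * ((m+2) - 1) + (m+2) := by
    rw [show (m+2) - 1 = m+1 from rfl]; ring
  have hD1 : 1 ≤ (m+2) * ((m+2) - 1) / 2 := by
    have h8 : 2 * 1 ≤ (m+2) * ((m+2) - 1) :=
      Nat.mul_le_mul (by omega) (by rw [show (m+2) - 1 = m+1 from rfl]; omega)
    omega
  have hc : (m+2)^2 - (m+2) - 1 = 2 * ((m+2) * ((m+2) - 1) / 2) - 1 := by omega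
  have hlZ : ((w.filter (fun p => p.2)).length : ℤ)
      + (w.filter (fun p => !p.2)).length = normSigma (m+2) β := by
    have h9 : (w.filter (fun p => p.2)).length + (w.filter (fun p => !p.2)).length
        = normSigma (m+2) β := by rw [hsplit]; exact hwlen'
    exact_mod_cast congrArg (fun z : ℕ => (z : ℤ)) h9
  rw [hc]
  have hKd : (t : ℤ) * ((((m+2) * ((m+2) - 1) / 2 : ℕ)) : ℤ)
      ≤ ((w.filter (fun p => !p.2)).length : ℤ) * ((((m+2) * ((m+2) - 1) / 2 : ℕ)) : ℤ) := by
    apply mul_le_mul_of_nonneg_right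
    · exact_mod_cast htk
    · positivity
  have hPd : ((w.filter (fun p => p.2)).length : ℤ)
      ≤ ((w.filter (fun p => p.2)).length : ℤ) * ((((m+2) * ((m+2) - 1) / 2 : ℕ)) : ℤ) := by
    apply le_mul_of_one_le_right
    · positivity
    · exact_mod_cast hD1
  have hfin : (t : ℤ) * ((((m+2) * ((m+2) - 1) / 2 : ℕ)) : ℤ) + (posLen (m+2) β' : ℤ)
      ≤ (2 * ((((m+2) * ((m+2) - 1) / 2 : ℕ)) : ℤ) - 1) * (normSigma (m+2) β : ℤ) := by
    rw [hplen, heβ', ← hlZ]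
    ring_nf
    ring_nf at hKd hPd
    linarith [hKd, hPd]
  have hcast : ∀ D' : ℕ, 1 ≤ D' → ((2 * D' - 1 : ℕ) : ℤ) = 2 * (D' : ℤ) - 1 := by
    intro D' h
    omega
  rw [← hcast _ hD1] at hfin
  exact_mod_cast hfin

end Braid
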